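/- For two coprime integers a, b ≥ 2 and every integer m ≥ 1, the Sylvester sum satisfies m·S_{m−1} = a^{m−1}·∑_{n=0}^{a−1} B_m(nb/a) − B_m, where B_m(x) is the m-th Bernoulli polynomial and B_m = B_m(0). -/

import Mathlib

section
open Finset Polynomial

lemma tele (m : ℕ) (x : ℚ) (N : ℕ) :
    (Polynomial.bernoulli (m+1)).eval (x + N) =
      (Polynomial.bernoulli (m+1)).eval x + (m+1) * ∑ k ∈ Finset.range N, (x + k) ^ m := by
  induction N with
  | zero => simp
  | succ N ih =>
    have h1 : x + ((N:ℚ)+1) = 1 + (x + N) := by ring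
    push_cast
    rw [h1, Polynomial.bernoulli_eval_one_add, ih, Finset.sum_range_succ, Nat.add_sub_cancel]
    push_cast
    ring

lemma stepA (a m : ℕ) (ha : 0 < a) (N : ℕ) :
    ∑ r ∈ Finset.range a, (Polynomial.bernoulli (m+1)).eval (((N:ℚ) + r)/a) =
      ∑ r ∈ Finset.range a, (Polynomial.bernoulli (m+1)).eval ((r:ℚ)/a)
      + ((a:ℚ)^m)⁻¹ * ((Polynomial.bernoulli (m+1)).eval (N:ℚ) - _root_.bernoulli (m+1)) := by
  have ha' : (a:ℚ) ≠ 0 := by positivity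
  set f : ℕ → ℚ := fun r => (Polynomial.bernoulli (m+1)).eval ((r:ℚ)/a) with hf
  have h1 : ∑ r ∈ Finset.range a, (Polynomial.bernoulli (m+1)).eval (((N:ℚ) + r)/a)
      = ∑ r ∈ Finset.Ico N (N+a), f r := by
    rw [Finset.sum_Ico_eq_sum_range]
    simp only [Nat.add_sub_cancel_left, hf]
    refine Finset.sum_congr rfl fun r _ => ?_
    push_cast; ring_nf
  have h2 : ∑ r ∈ Finset.Ico a (N+a), f r = ∑ r ∈ Finset.range N, f (a + r) := by
    rw [Finset.sum_Ico_eq_sum_range]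
    simp
  have h3 : ∑ r ∈ Finset.range N, f r + ∑ r ∈ Finset.Ico N (N+a), f r
      = ∑ r ∈ Finset.range a, f r + ∑ r ∈ Finset.Ico a (N+a), f r := by
    simp only [Finset.range_eq_Ico]
    rw [Finset.sum_Ico_consecutive _ (by omega) (by omega),
      Finset.sum_Ico_consecutive _ (by omega) (by omega)]
  have h4 : ∀ r : ℕ, f (a + r) - f r = ((m:ℚ)+1) * ((r:ℚ)/a)^m := by
    intro r
    have : ((a:ℚ) + r)/a = 1 + (r:ℚ)/a := by field_simp
    simp only [hf]
    push_cast
    rw [this, Polynomial.bernoulli_eval_one_add, Nat.add_sub_cancel]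
    push_cast; ring
  have h5 : ∑ r ∈ Finset.range N, f (a + r) - ∑ r ∈ Finset.range N, f r
      = ((a:ℚ)^m)⁻¹ * ((Polynomial.bernoulli (m+1)).eval (N:ℚ) - _root_.bernoulli (m+1)) := by
    rw [← Finset.sum_sub_distrib]
    simp only [h4]
    rw [← Polynomial.sum_range_pow_eq_bernoulli_sub]
    have : ∀ r : ℕ, ((m:ℚ)+1) * ((r:ℚ)/a)^m = ((a:ℚ)^m)⁻¹ * (((m:ℚ)+1) * (r:ℚ)^m) := by
      intro r; field_simp; rw [← mul_pow, div_mul_cancel₀ _ ha']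
    rw [Finset.sum_congr rfl fun r _ => this r, ← Finset.mul_sum, ← Finset.mul_sum]
  rw [h1]
  have := h3
  rw [h2] at this
  linarith [h5]

lemma raabe (a : ℕ) (ha : 0 < a) (m : ℕ) :
    (a:ℚ)^m * ∑ r ∈ Finset.range a, (Polynomial.bernoulli m).eval ((r:ℚ)/a)
      = (a:ℚ) * _root_.bernoulli m := by
  have ha' : (a:ℚ) ≠ 0 := by positivity
  set g : ℕ → Polynomial ℚ := fun r => Polynomial.C (a:ℚ)⁻¹ * Polynomial.X + Polynomial.C ((r:ℚ)/a) with hg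
  set P : Polynomial ℚ := ∑ r ∈ Finset.range a, (Polynomial.bernoulli (m+1)).comp (g r) with hP
  set c : ℚ := P.eval 0 - ((a:ℚ)^m)⁻¹ * _root_.bernoulli (m+1) with hc
  have hPeval : ∀ x : ℚ, P.eval x = ∑ r ∈ Finset.range a, (Polynomial.bernoulli (m+1)).eval ((x + r)/a) := by
    intro x
    rw [hP, Polynomial.eval_finset_sum]
    refine Finset.sum_congr rfl fun r _ => ?_
    rw [Polynomial.eval_comp]
    congr 1
    simp [hg]
    field_simp
  -- the difference polynomial vanishes on ℕ
  set Q : Polynomial ℚ := Polynomial.C ((a:ℚ)^m)⁻¹ * Polynomial.bernoulli (m+1) + Polynomial.C c with hQ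
  have hPQ : P = Q := by
    have hroots : ∀ N : ℕ, (P - Q).eval (N : ℚ) = 0 := by
      intro N
      have h0 : P.eval 0 = ∑ r ∈ Finset.range a, (Polynomial.bernoulli (m+1)).eval ((r:ℚ)/a) := by
        rw [hPeval]; simp
      have := stepA a m ha N
      rw [Polynomial.eval_sub, hPeval, hQ]
      simp only [Polynomial.eval_add, Polynomial.eval_mul, Polynomial.eval_C]
      rw [hc, h0]
      linarith [this]
    by_contra hne
    have hfin : {x : ℚ | (P - Q).IsRoot x}.Finite := Polynomial.finite_setOf_isRoot (sub_ne_zero.mpr hne)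
    have hsub : Set.range (Nat.cast : ℕ → ℚ) ⊆ {x : ℚ | (P - Q).IsRoot x} := by
      rintro x ⟨N, rfl⟩; exact hroots N
    have hinf : (Set.range (Nat.cast : ℕ → ℚ)).Infinite :=
      Set.infinite_range_of_injective Nat.cast_injective
    exact (hinf.mono hsub) hfin
  -- differentiate
  have hder : Polynomial.derivative P = Polynomial.derivative Q := by rw [hPQ]
  have hderP : Polynomial.derivative P
      = ∑ r ∈ Finset.range a, Polynomial.C (a:ℚ)⁻¹ *
          (((m:ℚ[X])+1) * Polynomial.bernoulli m).comp (g r) := by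
    rw [hP, Polynomial.derivative_sum]
    refine Finset.sum_congr rfl fun r _ => ?_
    rw [Polynomial.derivative_comp, Polynomial.derivative_bernoulli_add_one]
    simp [hg]
  have hderQ : Polynomial.derivative Q
      = Polynomial.C ((a:ℚ)^m)⁻¹ * (((m:ℚ[X])+1) * Polynomial.bernoulli m) := by
    rw [hQ]
    simp [Polynomial.derivative_bernoulli_add_one]
  have hkey := congrArg (Polynomial.eval (0:ℚ)) hder
  rw [hderP, hderQ] at hkey
  simp only [Polynomial.eval_finset_sum, Polynomial.eval_mul, Polynomial.eval_C,
    Polynomial.eval_comp, Polynomial.eval_add, Polynomial.eval_one, Polynomial.eval_natCast,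
    Polynomial.eval_X, Polynomial.bernoulli_eval_zero] at hkey
  have hgx : ∀ x : ℕ, Polynomial.eval (0:ℚ) (g x) = (x:ℚ)/a := by
    intro x; simp [hg]
  simp only [hgx] at hkey
  rw [← Finset.mul_sum, ← Finset.mul_sum] at hkey
  have hm1 : ((m:ℚ)+1) ≠ 0 := by positivity
  field_simp at hkey
  have h2 : ((m:ℚ)+1) * ((a:ℚ)^m * ∑ r ∈ Finset.range a, (Polynomial.bernoulli m).eval ((r:ℚ)/a))
      = ((m:ℚ)+1) * ((a:ℚ) * _root_.bernoulli m) := by linear_combination ((m:ℚ)+1) * hkey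
  exact mul_left_cancel₀ hm1 h2

end

lemma nonrep_iff (a b : ℕ) (ha : 2 ≤ a) (hab : Nat.Coprime a b) (n : ℕ) :
    (0 < n ∧ ¬ ∃ x y : ℕ, n = a * x + b * y) ↔
      ∃ j, (1 ≤ j ∧ j < a) ∧ ∃ k, k < j * b / a ∧ n = j * b % a + a * k := by
  haveI : NeZero a := ⟨by omega⟩
  have ha0 : 0 < a := by omega
  have hbinv : (b : ZMod a) * (b : ZMod a)⁻¹ = 1 := ZMod.coe_mul_inv_eq_one b hab.symm
  constructor
  · rintro ⟨hn, hrep⟩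
    set j : ℕ := ((n : ZMod a) * (b : ZMod a)⁻¹).val with hj
    have hjlt : j < a := ZMod.val_lt _
    have hjcast : ((j : ℕ) : ZMod a) = (n : ZMod a) * (b : ZMod a)⁻¹ := by
      rw [hj, ZMod.natCast_val, ZMod.cast_id]
    have hmod : (j * b) % a = n % a := by
      have h : ((j * b : ℕ) : ZMod a) = ((n : ℕ) : ZMod a) := by
        push_cast
        rw [hjcast, mul_assoc, mul_comm ((b:ZMod a)⁻¹) _, hbinv, mul_one]
      have := (ZMod.natCast_eq_natCast_iff _ _ _).mp h
      exact this
    -- j ≠ 0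
    have hj1 : 1 ≤ j := by
      rcases Nat.eq_zero_or_pos j with h0 | h1
      · exfalso
        apply hrep
        have : n % a = 0 := by rw [← hmod, h0]; simp
        refine ⟨n / a, 0, ?_⟩
        have := Nat.mod_add_div n a
        omega
      · exact h1
    -- n < j * b
    have hlt : n < j * b := by
      by_contra h
      push_neg at h
      apply hrep
      have hdvd : a ∣ n - j * b := (Nat.modEq_iff_dvd' h).mp hmod
      obtain ⟨x, hx⟩ := hdvd
      exact ⟨x, j, by rw [mul_comm b j]; omega⟩
    refine ⟨j, ⟨hj1, hjlt⟩, n / a, ?_, ?_⟩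
    · have h1 := Nat.mod_add_div (j*b) a
      have h2 := Nat.mod_add_div n a
      have h3 : n % a = j*b % a := hmod.symm
      have h4 : n % a < a := Nat.mod_lt _ ha0
      by_contra h
      push_neg at h
      -- n / a ≥ j*b/a implies n ≥ j*b
      nlinarith [Nat.mul_le_mul_left a h]
    · have := Nat.mod_add_div n a
      omega
  · rintro ⟨j, ⟨hj1, hjlt⟩, k, hk, rfl⟩
    have hndvd : ¬ a ∣ j * b := by
      intro hd
      have : a ∣ j := (Nat.Coprime.dvd_of_dvd_mul_right hab) hd
      have := Nat.le_of_dvd (by omega) this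
      omega
    have hr0 : 0 < j * b % a := by
      rcases Nat.eq_zero_or_pos (j * b % a) with h | h
      · exact absurd (Nat.dvd_of_mod_eq_zero h) hndvd
      · exact h
    refine ⟨by omega, ?_⟩
    rintro ⟨x, y, hxy⟩
    set n := j * b % a + a * k with hn
    -- normalize y
    have hxy' : n = a * (x + b * (y / a)) + b * (y % a) := by
      rw [hxy]
      have := Nat.mod_add_div y a
      ring_nf
      nlinarith [Nat.mod_add_div y a]
    have hylt : y % a < a := Nat.mod_lt _ ha0
    -- mod a: b * (y%a) ≡ n ≡ b * j
    have hmod1 : (b * (y % a)) % a = n % a := by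
      conv_rhs => rw [hxy', Nat.add_comm]
      rw [Nat.add_mul_mod_self_left]
    have hmod2 : n % a = (j * b) % a := by
      rw [hn, Nat.add_mul_mod_self_left, Nat.mod_mod_of_dvd _ dvd_rfl]
    have hyj : y % a = j := by
      have h : b * (y % a) ≡ b * j [MOD a] := by
        unfold Nat.ModEq
        rw [hmod1, hmod2, mul_comm]
      have h2 : y % a ≡ j [MOD a] := h.cancel_left_of_coprime hab
      have := Nat.mod_eq_of_lt hylt
      have := Nat.mod_eq_of_lt hjlt
      unfold Nat.ModEq at h2
      omega
    -- then n ≥ b * j, contradiction with n < j * b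
    have hge : j * b ≤ n := by
      rw [hxy', hyj, mul_comm b j]
      omega
    have hlt : n < j * b := by
      have h1 := Nat.mod_add_div (j*b) a
      have : a * k < a * (j*b/a) := (Nat.mul_lt_mul_left ha0).mpr hk
      omega
    omega


lemma rj_inj (a b : ℕ) (hab : Nat.Coprime a b) {j j' : ℕ} (hj : j < a) (hj' : j' < a)
    (h : j * b % a = j' * b % a) : j = j' := by
  have hmeq : j * b ≡ j' * b [MOD a] := h
  have h2 : j ≡ j' [MOD a] := hmeq.cancel_right_of_coprime hab
  unfold Nat.ModEq at h2
  rw [Nat.mod_eq_of_lt hj, Nat.mod_eq_of_lt hj'] at h2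
  exact h2

lemma rj_mem (a b j : ℕ) (ha : 2 ≤ a) (hab : Nat.Coprime a b) (hj : 1 ≤ j) (hj' : j < a) :
    1 ≤ j * b % a ∧ j * b % a < a := by
  refine ⟨?_, Nat.mod_lt _ (by omega)⟩
  rcases Nat.eq_zero_or_pos (j * b % a) with h | h
  · exfalso
    have hd : a ∣ j * b := Nat.dvd_of_mod_eq_zero h
    have : a ∣ j := (Nat.Coprime.dvd_of_dvd_mul_right hab) hd
    have := Nat.le_of_dvd (by omega) this
    omega
  · exact h

theorem sylvester_sum_two_variable_bernoulli
    (a b : ℕ) (ha : 2 ≤ a) (hb : 2 ≤ b) (hab : Nat.Coprime a b)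
    (NR : Finset ℕ)
    (hNR : ∀ n : ℕ, n ∈ NR ↔ 0 < n ∧ ¬ ∃ x y : ℕ, n = a * x + b * y)
    (m : ℕ) (hm : 1 ≤ m) :
    (m : ℚ) * ∑ n ∈ NR, (n : ℚ) ^ (m - 1) =
      (a : ℚ) ^ (m - 1) *
        ∑ n ∈ Finset.range a, (Polynomial.bernoulli m).eval ((n : ℚ) * b / a)
      - bernoulli m := by
  obtain ⟨M, rfl⟩ : ∃ M, m = M + 1 := ⟨m - 1, by omega⟩
  simp only [Nat.add_sub_cancel]
  have ha0 : 0 < a := by omega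
  have haQ : (a:ℚ) ≠ 0 := by positivity
  set B : ℕ → Finset ℕ := fun j => (Finset.range (j*b/a)).image (fun k => j*b % a + a*k) with hB
  -- decomposition of NR
  have h2 : NR = (Finset.Ico 1 a).biUnion B := by
    ext n
    rw [hNR, nonrep_iff a b ha hab]
    simp only [hB, Finset.mem_biUnion, Finset.mem_Ico, Finset.mem_image, Finset.mem_range]
    constructor
    · rintro ⟨j, hj, k, hk, h⟩; exact ⟨j, hj, k, hk, h.symm⟩
    · rintro ⟨j, hj, k, hk, h⟩; exact ⟨j, hj, k, hk, h.symm⟩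
  have hdisj : (↑(Finset.Ico 1 a) : Set ℕ).PairwiseDisjoint B := by
    intro j hj j' hj' hne
    simp only [Finset.coe_Ico, Set.mem_Ico] at hj hj'
    simp only [Function.onFun]
    rw [Finset.disjoint_left]
    rintro n hn hn'
    simp only [hB, Finset.mem_image, Finset.mem_range] at hn hn'
    obtain ⟨k, hk, rfl⟩ := hn
    obtain ⟨k', hk', heq⟩ := hn'
    have h3 : (j'*b%a + a*k') % a = (j*b%a + a*k) % a := by rw [heq]
    rw [Nat.add_mul_mod_self_left, Nat.add_mul_mod_self_left,
      Nat.mod_mod_of_dvd _ dvd_rfl, Nat.mod_mod_of_dvd _ dvd_rfl] at h3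
    exact hne (rj_inj a b hab (by omega) (by omega) h3.symm)
  -- sum over NR as a double sum
  have hsum : ∑ n ∈ NR, (n:ℚ)^M
      = ∑ j ∈ Finset.Ico 1 a, ∑ k ∈ Finset.range (j*b/a), ((j*b % a + a*k : ℕ) : ℚ)^M := by
    rw [h2, Finset.sum_biUnion hdisj]
    refine Finset.sum_congr rfl fun j _ => ?_
    rw [hB]
    rw [Finset.sum_image]
    intro k1 _ k2 _ h
    have : a * k1 = a * k2 := by simp only at h; omega
    exact Nat.eq_of_mul_eq_mul_left ha0 this
  -- per-residue Bernoulli evaluation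
  have hper : ∀ j ∈ Finset.Ico 1 a,
      ((M:ℚ)+1) * ∑ k ∈ Finset.range (j*b/a), ((j*b % a + a*k : ℕ) : ℚ)^M
        = (a:ℚ)^M * ((Polynomial.bernoulli (M+1)).eval ((j:ℚ)*b/a)
            - (Polynomial.bernoulli (M+1)).eval (((j*b % a : ℕ):ℚ)/a)) := by
    intro j hj
    have hq := Nat.mod_add_div (j*b) a
    have htel := tele M (((j*b % a : ℕ):ℚ)/a) (j*b/a)
    have harg : ((j*b % a : ℕ):ℚ)/a + ((j*b/a : ℕ):ℚ) = (j:ℚ)*b/a := by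
      have hqQ : ((j*b % a : ℕ):ℚ) + (a:ℚ) * ((j*b/a : ℕ):ℚ) = (j:ℚ)*(b:ℚ) := by
        exact_mod_cast hq
      field_simp
      linear_combination hqQ
    rw [harg] at htel
    have hcast : ∀ k : ℕ, ((j*b % a + a*k : ℕ) : ℚ)^M = (a:ℚ)^M * (((j*b % a : ℕ):ℚ)/a + k)^M := by
      intro k
      rw [← mul_pow]
      congr 1
      push_cast
      field_simp
    rw [Finset.sum_congr rfl fun k _ => hcast k, ← Finset.mul_sum]
    rw [htel]
    push_cast
    ring
  -- sum over residues r_j equals sum over Ico 1 a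
  have himg : (Finset.Ico 1 a).image (fun j => j*b % a) = Finset.Ico 1 a := by
    apply Finset.eq_of_subset_of_card_le
    · intro r hr
      simp only [Finset.mem_image, Finset.mem_Ico] at hr ⊢
      obtain ⟨j, hj, rfl⟩ := hr
      exact rj_mem a b j ha hab hj.1 hj.2
    · rw [Finset.card_image_of_injOn]
      intro j hj j' hj' h
      simp only [Finset.coe_Ico, Set.mem_Ico] at hj hj'
      exact rj_inj a b hab hj.2 hj'.2 h
  have hres : ∑ j ∈ Finset.Ico 1 a, (Polynomial.bernoulli (M+1)).eval (((j*b % a : ℕ):ℚ)/a)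
      = ∑ r ∈ Finset.Ico 1 a, (Polynomial.bernoulli (M+1)).eval ((r:ℚ)/a) := by
    conv_rhs => rw [← himg]
    rw [Finset.sum_image]
    intro j hj j' hj' h
    simp only [Finset.mem_coe, Finset.mem_Ico] at hj hj'
    exact rj_inj a b hab hj.2 hj'.2 h
  -- Raabe
  have hraabe := raabe a ha0 (M+1)
  have hsplit : ∑ r ∈ Finset.range a, (Polynomial.bernoulli (M+1)).eval ((r:ℚ)/a)
      = _root_.bernoulli (M+1) + ∑ r ∈ Finset.Ico 1 a, (Polynomial.bernoulli (M+1)).eval ((r:ℚ)/a) := by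
    rw [Finset.range_eq_Ico, Finset.sum_eq_sum_Ico_succ_bot ha0]
    simp [Polynomial.bernoulli_eval_zero]
  rw [hsplit] at hraabe
  -- split the RHS sum
  have hsplit2 : ∑ n ∈ Finset.range a, (Polynomial.bernoulli (M+1)).eval ((n:ℚ)*b/a)
      = _root_.bernoulli (M+1) + ∑ j ∈ Finset.Ico 1 a, (Polynomial.bernoulli (M+1)).eval ((j:ℚ)*b/a) := by
    rw [Finset.range_eq_Ico, Finset.sum_eq_sum_Ico_succ_bot ha0]
    simp [Polynomial.bernoulli_eval_zero]
  set E := ∑ j ∈ Finset.Ico 1 a, (Polynomial.bernoulli (M+1)).eval ((j:ℚ)*b/a) with hE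
  set F := ∑ r ∈ Finset.Ico 1 a, (Polynomial.bernoulli (M+1)).eval ((r:ℚ)/a) with hF0
  have hpow : (a:ℚ)^(M+1) = (a:ℚ)^M * a := by ring
  rw [hpow] at hraabe
  have hF : (a:ℚ)^M * F = _root_.bernoulli (M+1) - (a:ℚ)^M * _root_.bernoulli (M+1) := by
    have h' : (a:ℚ) * ((a:ℚ)^M * (_root_.bernoulli (M+1) + F))
        = (a:ℚ) * (_root_.bernoulli (M+1)) := by linear_combination hraabe
    have := mul_left_cancel₀ haQ h'
    linear_combination this
  have hL : ((M:ℚ)+1) * ∑ n ∈ NR, (n:ℚ)^M = (a:ℚ)^M * E - (a:ℚ)^M * F := by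
    rw [hsum, Finset.mul_sum, Finset.sum_congr rfl hper]
    simp_rw [mul_sub]
    rw [Finset.sum_sub_distrib, ← Finset.mul_sum, ← Finset.mul_sum, hres, hE, hF0]
  rw [hsplit2]
  push_cast
  linear_combination hL - hF
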